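/- Let q be a prime, k ≥ 1, and n = Σ_{i=0}^{k−1} q^i = (q^k − 1)/(q − 1). Then there exists a k-dimensional ZMod q-subspace C of (Fin n → ZMod q) whose Manhattan weight set equals {1, 2, …, q^k − 1}; in particular |w_M(C)| = q^k − 1, so L_M(k,q) = q^k − 1 and M(M,k,q) = (q^k − 1)/(q − 1). -/

import Mathlib

/-- The Manhattan weight of a vector over `ZMod q`. -/
def manW {q n : ℕ} (c : Fin n → ZMod q) : ℕ := ∑ i, (c i).val

/-- The Manhattan weight set of a set of vectors. -/
def manSet {q n : ℕ} (C : Set (Fin n → ZMod q)) : Set ℕ :=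
  {x | ∃ c ∈ C, c ≠ 0 ∧ manW c = x}

lemma digitSum (q : ℕ) (hq : 2 ≤ q) : ∀ k m : ℕ, m < q ^ k →
    ∑ i ∈ Finset.range k, q ^ i * (m / q ^ i % q) = m := by
  intro k
  induction k with
  | zero => intro m hm; simp [Nat.lt_one_iff.mp hm]
  | succ k ih =>
    intro m hm
    rw [Finset.sum_range_succ']
    have h1 : ∀ i, q ^ (i + 1) * (m / q ^ (i + 1) % q) =
        q * (q ^ i * (m / q / q ^ i % q)) := by
      intro i
      rw [Nat.div_div_eq_div_mul, ← pow_succ']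
      ring
    simp only [h1]
    rw [← Finset.mul_sum, ih (m / q) (by
      rw [Nat.div_lt_iff_lt_mul (by omega)]
      calc m < q ^ (k + 1) := hm
        _ = q ^ k * q := by rw [pow_succ])]
    simp only [pow_zero, one_mul, Nat.pow_zero, Nat.div_one]
    exact Nat.div_add_mod m q

lemma geomNat (q : ℕ) (hq : 1 ≤ q) : ∀ k, (q - 1) * ∑ i ∈ Finset.range k, q ^ i = q ^ k - 1 := by
  intro k
  induction k with
  | zero => simp
  | succ k ih =>
    rw [Finset.sum_range_succ, Nat.mul_add, ih, pow_succ]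
    have h1 : 1 ≤ q ^ k := Nat.one_le_pow _ _ (by omega)
    have h2 : q ^ k ≤ q ^ k * q := Nat.le_mul_of_pos_right _ (by omega)
    rw [Nat.sub_mul, one_mul, Nat.mul_comm (q ^ k) q, Nat.mul_comm q (q ^ k)]
    omega

theorem stmt17 (q k n : ℕ) (hq : q.Prime) (hk : 1 ≤ k)
    (hn : n = ∑ i ∈ Finset.range k, q ^ i) :
    ∃ C : Submodule (ZMod q) (Fin n → ZMod q),
      Module.finrank (ZMod q) C = k ∧
      manSet (C : Set (Fin n → ZMod q)) = Set.Icc 1 (q ^ k - 1) := by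
  haveI := Fact.mk hq
  have hq2 : 2 ≤ q := hq.two_le
  let e : (Σ i : Fin k, Fin (q ^ (i : ℕ))) ≃ Fin n :=
    Fintype.equivOfCardEq (by
      simp [Fintype.card_sigma, Fin.sum_univ_eq_sum_range, hn])
  let φ : (Fin k → ZMod q) →ₗ[ZMod q] (Fin n → ZMod q) :=
    { toFun := fun a j => a (e.symm j).1
      map_add' := fun a b => rfl
      map_smul' := fun r a => rfl }
  have hφinj : Function.Injective φ := by
    intro a b hab
    funext i
    have hpos : 0 < q ^ (i : ℕ) := Nat.pow_pos (by omega)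
    have := congrFun hab (e ⟨i, ⟨0, hpos⟩⟩)
    simpa [φ] using this
  have hw : ∀ a : Fin k → ZMod q,
      manW (φ a) = ∑ i : Fin k, q ^ (i : ℕ) * (a i).val := by
    intro a
    unfold manW
    calc ∑ j : Fin n, ((φ a) j).val
        = ∑ x : Σ i : Fin k, Fin (q ^ (i : ℕ)), (a x.1).val := by
          rw [← Equiv.sum_comp e (fun j => ((φ a) j).val)]
          simp [φ]
      _ = ∑ i : Fin k, q ^ (i : ℕ) * (a i).val := by
          rw [← Finset.univ_sigma_univ, Finset.sum_sigma]
          simp [Finset.sum_const, mul_comm]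
  refine ⟨LinearMap.range φ, ?_, ?_⟩
  · rw [LinearMap.finrank_range_of_inj hφinj, Module.finrank_fin_fun]
  · ext m
    simp only [manSet, Set.mem_setOf_eq, Set.mem_Icc, SetLike.mem_coe, LinearMap.mem_range]
    constructor
    · rintro ⟨c, ⟨a, rfl⟩, hc0, rfl⟩
      have ha0 : a ≠ 0 := by
        intro h; exact hc0 (by rw [h, map_zero])
      obtain ⟨i, hi⟩ := Function.ne_iff.mp ha0
      have hi' : a i ≠ 0 := hi
      rw [hw]
      constructor
      · have hval : 1 ≤ (a i).val := by
          rcases Nat.eq_zero_or_pos (a i).val with h | h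
          · exact absurd ((ZMod.val_eq_zero _).mp h) hi'
          · exact h
        calc 1 ≤ q ^ (i : ℕ) * (a i).val := by
              have : 1 ≤ q ^ (i : ℕ) := Nat.one_le_pow _ _ (by omega)
              calc 1 = 1 * 1 := by ring
                _ ≤ q ^ (i : ℕ) * (a i).val := Nat.mul_le_mul this hval
          _ ≤ ∑ j : Fin k, q ^ (j : ℕ) * (a j).val :=
              Finset.single_le_sum (f := fun j : Fin k => q ^ (j : ℕ) * (a j).val)
                (fun j _ => Nat.zero_le _) (Finset.mem_univ i)
      · calc ∑ j : Fin k, q ^ (j : ℕ) * (a j).val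
            ≤ ∑ j : Fin k, q ^ (j : ℕ) * (q - 1) := by
              refine Finset.sum_le_sum fun j _ => Nat.mul_le_mul_left _ ?_
              have := (a j).val_lt
              omega
          _ = q ^ k - 1 := by
              rw [Fin.sum_univ_eq_sum_range (fun i => q ^ i * (q - 1))]
              rw [← geomNat q (by omega) k, Finset.mul_sum]
              exact Finset.sum_congr rfl fun i _ => Nat.mul_comm _ _
    · rintro ⟨hm1, hm2⟩
      have hmlt : m < q ^ k := by
        have : 1 ≤ q ^ k := Nat.one_le_pow _ _ (by omega)
        omega
      set a : Fin k → ZMod q := fun i => ((m / q ^ (i : ℕ) % q : ℕ) : ZMod q) with ha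
      have hval : ∀ i : Fin k, (a i).val = m / q ^ (i : ℕ) % q := by
        intro i
        exact ZMod.val_cast_of_lt (Nat.mod_lt _ (by omega))
      have hwa : manW (φ a) = m := by
        rw [hw]
        simp only [hval]
        rw [Fin.sum_univ_eq_sum_range (fun i => q ^ i * (m / q ^ i % q))]
        exact digitSum q hq2 k m hmlt
      refine ⟨φ a, ⟨a, rfl⟩, ?_, hwa⟩
      intro h
      have : m = 0 := by rw [← hwa, h]; simp [manW]
      omega
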